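/- Let p ∈ [1, ∞) and X be a reflexive Banach space with a continuous frame ({f_x}, {f_x*}) with respect to L^p(X, μ): sup_x ‖f_x*‖ < ∞, x ↦ ⟨f, f_x*⟩ lies in L^p(μ) for all f, and there are constants c, C > 0 with c‖f‖ ≤ ‖⟨f, f_·*⟩‖_{L^p(μ)} ≤ C‖f‖. Suppose (F_n) is an increasing exhaustion of X with μ(F_n) < ∞. Then a bounded set F ⊆ X is precompact if and only if lim_{n→∞} sup_{f∈F} ∫_{X∖F_n} |⟨f, f_x*⟩|^p dμ(x) = 0. -/

import Mathlib

open MeasureTheory NormedSpace Filter Topology TopologicalSpace ENNReal NNReal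

lemma aux_exists_dual_annihilator {X : Type*} [NormedAddCommGroup X] [NormedSpace ℂ X]
    (S : Submodule ℂ X) (hS : IsClosed (S : Set X)) {x : X} (hx : x ∉ S) :
    ∃ g : X →L[ℂ] ℂ, (∀ v ∈ S, g v = 0) ∧ g x ≠ 0 := by
  haveI : IsClosed (S : Set X) := hS
  set q : X →L[ℂ] X ⧸ S := LinearMap.mkContinuous S.mkQ 1
    (fun m => by simpa using Submodule.Quotient.norm_mk_le S m) with hq
  have hqx : (Submodule.Quotient.mk x : X ⧸ S) ≠ 0 := by
    simpa [Submodule.Quotient.mk_eq_zero] using hx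
  obtain ⟨φ, hφnorm, hφx⟩ := exists_dual_vector ℂ (Submodule.Quotient.mk x : X ⧸ S) (norm_ne_zero_iff.mpr hqx)
  refine ⟨φ.comp q, ?_, ?_⟩
  · intro v hv
    have h0 : q v = 0 := by
      show (Submodule.Quotient.mk v : X ⧸ S) = 0
      simpa [Submodule.Quotient.mk_eq_zero] using hv
    simp [ContinuousLinearMap.comp_apply, h0]
  · show φ (q x) ≠ 0
    have hqx' : q x = Submodule.Quotient.mk x := rfl
    rw [hqx', hφx]
    exact Complex.ofReal_ne_zero.mpr (norm_ne_zero_iff.mpr hqx)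

lemma aux_separable_of_dual_separable {W : Type*} [NormedAddCommGroup W] [NormedSpace ℂ W]
    (h : SeparableSpace (StrongDual ℂ W)) :
    SeparableSpace W := by
  haveI := h
  obtain ⟨u, hu⟩ := TopologicalSpace.exists_dense_seq (StrongDual ℂ W)
  have hchoice : ∀ n : ℕ, ∃ x : W, ‖x‖ ≤ 1 ∧ ‖u n‖ / 2 ≤ ‖(u n) x‖ := by
    intro n
    rcases (norm_nonneg (u n)).eq_or_lt with h0 | h0
    · exact ⟨0, by simp, by simp [← h0]⟩
    · obtain ⟨x, hx1, hx2⟩ := (u n).exists_lt_apply_of_lt_opNorm (half_lt_self h0)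
      exact ⟨x, hx1.le, hx2.le⟩
  choose xs hxs1 hxs2 using hchoice
  set S : Submodule ℂ W := (Submodule.span ℂ (Set.range xs)).topologicalClosure with hSdef
  have hSc : IsClosed (S : Set W) := Submodule.isClosed_topologicalClosure _
  have hStop : ∀ w : W, w ∈ S := by
    by_contra hw
    push_neg at hw
    obtain ⟨w, hw⟩ := hw
    obtain ⟨g, hg0, hgx⟩ := aux_exists_dual_annihilator S hSc hw
    have hgne : g ≠ 0 := fun h => hgx (by simp [h])
    have hgpos : 0 < ‖g‖ := norm_pos_iff.mpr hgne
    obtain ⟨n, hn⟩ := Metric.denseRange_iff.mp hu g (‖g‖ / 3) (by linarith)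
    have hdist : ‖u n - g‖ < ‖g‖ / 3 := by
      rw [← dist_eq_norm]
      rwa [dist_comm]
    have hxsS : xs n ∈ S := by
      apply Submodule.le_topologicalClosure
      exact Submodule.subset_span ⟨n, rfl⟩
    have hgxs : g (xs n) = 0 := hg0 _ hxsS
    have h1 : ‖(u n) (xs n)‖ ≤ ‖u n - g‖ := by
      have : (u n) (xs n) = (u n - g) (xs n) := by simp [hgxs]
      rw [this]
      calc ‖(u n - g) (xs n)‖ ≤ ‖u n - g‖ * ‖xs n‖ := (u n - g).le_opNorm _
        _ ≤ ‖u n - g‖ * 1 := by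
            exact mul_le_mul_of_nonneg_left (hxs1 n) (norm_nonneg _)
        _ = ‖u n - g‖ := mul_one _
    have h2 : 2 * ‖g‖ / 3 ≤ ‖u n‖ := by
      have := norm_sub_norm_le (u n) g
      have h3 : ‖g‖ - ‖u n‖ ≤ ‖u n - g‖ := by
        have := norm_sub_norm_le g (u n)
        rwa [norm_sub_rev] at this
      linarith
    have := hxs2 n
    linarith
  have hsep : IsSeparable (Set.univ : Set W) := by
    have h1 : IsSeparable (Submodule.span ℂ (Set.range xs) : Set W) :=
      (Set.countable_range xs).isSeparable.span
    have h2 : IsSeparable (S : Set W) := by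
      rw [hSdef]
      exact h1.closure
    have : (S : Set W) = Set.univ := Set.eq_univ_of_forall hStop
    rwa [this] at h2
  exact isSeparable_univ_iff.mp hsep
lemma aux_weak_seq_compact {X : Type*} [NormedAddCommGroup X] [NormedSpace ℂ X]
    (hrefl : Function.Surjective (NormedSpace.inclusionInDoubleDual ℂ X))
    {M : ℝ} (v : ℕ → X) (hv : ∀ k, ‖v k‖ ≤ M) :
    ∃ (φ : ℕ → ℕ) (x : X), StrictMono φ ∧
      ∀ g : X →L[ℂ] ℂ, Tendsto (fun k => g (v (φ k))) atTop (𝓝 (g x)) := by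
  have hM0 : 0 ≤ M := le_trans (norm_nonneg (v 0)) (hv 0)
  set V : Submodule ℂ X := (Submodule.span ℂ (Set.range v)).topologicalClosure with hVdef
  have hVclosed : IsClosed (V : Set X) := Submodule.isClosed_topologicalClosure _
  have hvV : ∀ k, v k ∈ V :=
    fun k => Submodule.le_topologicalClosure _ (Submodule.subset_span ⟨k, rfl⟩)
  -- restriction map
  let precomp : StrongDual ℂ X →L[ℂ] StrongDual ℂ ↥V := (ContinuousLinearMap.compL ℂ ↥V X ℂ).flip V.subtypeL
  have hprecomp : ∀ (g : StrongDual ℂ X) (w : ↥V), precomp g w = g w := fun g w => rfl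
  -- V is reflexive
  have hVrefl : Function.Surjective (NormedSpace.inclusionInDoubleDual ℂ ↥V) := by
    intro ψ
    obtain ⟨x, hx⟩ := hrefl (ψ.comp precomp)
    have hgx : ∀ g : StrongDual ℂ X, g x = ψ (precomp g) := by
      intro g
      have h1 : (NormedSpace.inclusionInDoubleDual ℂ X x) g = (ψ.comp precomp) g := by rw [hx]
      simpa using h1
    have hxV : x ∈ V := by
      by_contra hxV
      obtain ⟨g₀, hg₀, hg₀x⟩ := aux_exists_dual_annihilator V hVclosed hxV
      have hz : precomp g₀ = 0 := by
        ext w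
        exact hg₀ w w.2
      have := hgx g₀
      rw [hz] at this
      simp at this
      exact hg₀x this
    refine ⟨⟨x, hxV⟩, ?_⟩
    ext h
    obtain ⟨g, hg, -⟩ := exists_extension_norm_eq (𝕜 := ℂ) V h
    have h1 : precomp g = h := by
      ext w
      exact hg w
    calc (NormedSpace.inclusionInDoubleDual ℂ ↥V ⟨x, hxV⟩) h = h ⟨x, hxV⟩ := rfl
      _ = g x := (hg ⟨x, hxV⟩).symm
      _ = ψ (precomp g) := hgx g
      _ = ψ h := by rw [h1]
  -- separability
  haveI hVsep : TopologicalSpace.SeparableSpace ↥V := by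
    have h1 : TopologicalSpace.IsSeparable (V : Set X) := by
      rw [hVdef, Submodule.topologicalClosure_coe]
      exact ((Set.countable_range v).isSeparable.span).closure
    exact h1.separableSpace
  haveI hbidualsep : TopologicalSpace.SeparableSpace (StrongDual ℂ (StrongDual ℂ ↥V)) :=
    hVrefl.denseRange.separableSpace (NormedSpace.inclusionInDoubleDual ℂ ↥V).continuous
  haveI hdualsep : TopologicalSpace.SeparableSpace (StrongDual ℂ ↥V) :=
    aux_separable_of_dual_separable (W := StrongDual ℂ ↥V) inferInstance
  obtain ⟨u, hu⟩ := TopologicalSpace.exists_dense_seq (StrongDual ℂ ↥V)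
  -- extensions of the dense sequence
  have hext : ∀ i : ℕ, ∃ g : StrongDual ℂ X, ∀ w : ↥V, g w = u i w := by
    intro i
    obtain ⟨g, hg, -⟩ := exists_extension_norm_eq (𝕜 := ℂ) V (u i)
    exact ⟨g, hg⟩
  choose gext hgext using hext
  -- diagonal extraction via compactness of the product of balls
  set s : ℕ → (ℕ → ℂ) := fun k i => gext i (v k) with hsdef
  have hK : IsCompact (Set.univ.pi fun i => Metric.closedBall (0 : ℂ) (‖gext i‖ * M)) :=
    isCompact_univ_pi fun i => isCompact_closedBall _ _
  have hs : ∀ k, s k ∈ Set.univ.pi fun i => Metric.closedBall (0 : ℂ) (‖gext i‖ * M) := by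
    intro k
    intro i _
    simp only [Metric.mem_closedBall, dist_zero_right]
    calc ‖gext i (v k)‖ ≤ ‖gext i‖ * ‖v k‖ := (gext i).le_opNorm _
      _ ≤ ‖gext i‖ * M := mul_le_mul_of_nonneg_left (hv k) (norm_nonneg _)
  obtain ⟨L, _, φ, hφ, hconv⟩ := hK.tendsto_subseq hs
  have hcoord : ∀ i, Tendsto (fun k => gext i (v (φ k))) atTop (𝓝 (L i)) := by
    rw [tendsto_pi_nhds] at hconv
    exact fun i => hconv i
  -- every functional converges along the subsequence
  have key : ∀ g : X →L[ℂ] ℂ, CauchySeq fun k => g (v (φ k)) := by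
    intro g
    rw [Metric.cauchySeq_iff]
    intro ε hε
    obtain ⟨i, hi⟩ := Metric.denseRange_iff.mp hu (precomp g) (ε / (3 * (M + 1)))
      (by positivity)
    have hCi : CauchySeq fun k => gext i (v (φ k)) := (hcoord i).cauchySeq
    rw [Metric.cauchySeq_iff] at hCi
    obtain ⟨N, hN⟩ := hCi (ε / 3) (by linarith)
    have hclose : ∀ k, ‖g (v (φ k)) - gext i (v (φ k))‖ ≤ ε / 3 := by
      intro k
      have hmem : v (φ k) ∈ V := hvV _
      have he : g (v (φ k)) - gext i (v (φ k)) = (precomp g - u i) ⟨v (φ k), hmem⟩ := by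
        have e1 : precomp g ⟨v (φ k), hmem⟩ = g (v (φ k)) := rfl
        have e2 : u i ⟨v (φ k), hmem⟩ = gext i (v (φ k)) := (hgext i ⟨v (φ k), hmem⟩).symm
        simp [e1, e2]
      rw [he]
      have hnd : ‖precomp g - u i‖ < ε / (3 * (M + 1)) := by
        have := hi
        rw [dist_eq_norm (precomp g) (u i)] at this
        exact this
      calc ‖(precomp g - u i) ⟨v (φ k), hmem⟩‖
          ≤ ‖precomp g - u i‖ * ‖(⟨v (φ k), hmem⟩ : ↥V)‖ := (precomp g - u i).le_opNorm _
        _ ≤ (ε / (3 * (M + 1))) * (M + 1) := by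
            apply mul_le_mul hnd.le ?_ (norm_nonneg _) (by positivity)
            show ‖v (φ k)‖ ≤ M + 1
            linarith [hv (φ k)]
        _ ≤ ε / 3 := by
            rw [div_mul_eq_mul_div, mul_comm]
            rw [div_le_div_iff₀ (by positivity) (by norm_num)]
            ring_nf
            nlinarith
    refine ⟨N, fun a ha b hb => ?_⟩
    have h1 := hclose a
    have h2 := hclose b
    have h3 := hN a ha b hb
    rw [dist_eq_norm] at h3 ⊢
    calc ‖g (v (φ a)) - g (v (φ b))‖
        = ‖(g (v (φ a)) - gext i (v (φ a))) + (gext i (v (φ a)) - gext i (v (φ b)))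
            + (gext i (v (φ b)) - g (v (φ b)))‖ := by ring_nf
      _ ≤ ‖(g (v (φ a)) - gext i (v (φ a))) + (gext i (v (φ a)) - gext i (v (φ b)))‖
            + ‖gext i (v (φ b)) - g (v (φ b))‖ := norm_add_le _ _
      _ ≤ ‖g (v (φ a)) - gext i (v (φ a))‖ + ‖gext i (v (φ a)) - gext i (v (φ b))‖
            + ‖gext i (v (φ b)) - g (v (φ b))‖ := by
            gcongr
            exact norm_add_le _ _
      _ < ε := by
          have h2' : ‖gext i (v (φ b)) - g (v (φ b))‖ ≤ ε / 3 := by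
            rw [norm_sub_rev]; exact h2
          linarith
  -- construct the weak limit using reflexivity
  have hlim : ∀ g : X →L[ℂ] ℂ, ∃ z : ℂ, Tendsto (fun k => g (v (φ k))) atTop (𝓝 z) :=
    fun g => cauchySeq_tendsto_of_complete (key g)
  choose lim hlimt using hlim
  have hadd : ∀ g₁ g₂ : StrongDual ℂ X, lim (g₁ + g₂) = lim g₁ + lim g₂ := by
    intro g₁ g₂
    refine tendsto_nhds_unique (hlimt (g₁ + g₂)) ?_
    have := (hlimt g₁).add (hlimt g₂)
    simpa using this
  have hsmul : ∀ (a : ℂ) (g : StrongDual ℂ X), lim (a • g) = a • lim g := by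
    intro a g
    refine tendsto_nhds_unique (hlimt (a • g)) ?_
    have := (hlimt g).const_mul a
    simpa [smul_eq_mul] using this
  let Ψlin : StrongDual ℂ X →ₗ[ℂ] ℂ :=
    { toFun := lim, map_add' := hadd, map_smul' := hsmul }
  have hbound : ∀ g : StrongDual ℂ X, ‖Ψlin g‖ ≤ M * ‖g‖ := by
    intro g
    refine le_of_tendsto' (hlimt g).norm fun k => ?_
    calc ‖g (v (φ k))‖ ≤ ‖g‖ * ‖v (φ k)‖ := g.le_opNorm _
      _ ≤ ‖g‖ * M := mul_le_mul_of_nonneg_left (hv _) (norm_nonneg _)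
      _ = M * ‖g‖ := mul_comm _ _
  obtain ⟨x, hx⟩ := hrefl (LinearMap.mkContinuous Ψlin M hbound)
  refine ⟨φ, x, hφ, fun g => ?_⟩
  have hgx : g x = lim g := by
    have h1 : (NormedSpace.inclusionInDoubleDual ℂ X x) g
        = (LinearMap.mkContinuous Ψlin M hbound) g := by rw [hx]
    simp at h1; exact h1
  rw [hgx]
  exact hlimt g
lemma aux_root_add_le {p : ℝ} (hp : 1 ≤ p) {x y : ℝ} (hx : 0 ≤ x) (hy : 0 ≤ y) :
    (x + y) ^ (1/p) ≤ x ^ (1/p) + y ^ (1/p) := by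
  have hpne : p ≠ 0 := by positivity
  lift x to NNReal using hx
  lift y to NNReal using hy
  have key := NNReal.rpow_add_rpow_le_add (x ^ (1/p)) (y ^ (1/p)) hp
  rw [one_div, NNReal.rpow_inv_rpow hpne, NNReal.rpow_inv_rpow hpne] at key
  have := NNReal.coe_le_coe.mpr key
  push_cast at this
  simp only [one_div]
  exact this

lemma aux_minkowski {X Y : Type*} [NormedAddCommGroup X] [NormedSpace ℂ X]
    [MeasurableSpace Y] {μ : Measure Y} {p : ℝ} (hp : 1 ≤ p)
    (fstar : Y → (X →L[ℂ] ℂ))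
    (hint : ∀ f : X, Integrable (fun y => ‖fstar y f‖ ^ p) μ)
    (S : Set Y) (f g : X) :
    (∫ y in S, ‖fstar y (f + g)‖ ^ p ∂μ) ^ (1/p) ≤
      (∫ y in S, ‖fstar y f‖ ^ p ∂μ) ^ (1/p) + (∫ y in S, ‖fstar y g‖ ^ p ∂μ) ^ (1/p) := by
  have hp0 : 0 < p := lt_of_lt_of_le one_pos hp
  have hpne : p ≠ 0 := hp0.ne'
  -- a.e.-measurability of the coefficient norms as ℝ≥0∞-valued functions
  have am : ∀ h : X, AEMeasurable (fun y => (‖fstar y h‖₊ : ℝ≥0∞)) (μ.restrict S) := by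
    intro h
    have h1 : AEMeasurable (fun y => ‖fstar y h‖ ^ p) (μ.restrict S) :=
      ((hint h).aestronglyMeasurable.aemeasurable).restrict
    have h2 : AEMeasurable (fun y => (‖fstar y h‖ ^ p) ^ p⁻¹) (μ.restrict S) :=
      (Real.continuous_rpow_const (by positivity)).measurable.comp_aemeasurable h1
    have h3 : (fun y => (‖fstar y h‖ ^ p) ^ p⁻¹) = fun y => ‖fstar y h‖ := by
      funext y
      exact Real.rpow_rpow_inv (norm_nonneg _) hpne
    rw [h3] at h2
    exact h2.nnnorm.coe_nnreal_ennreal.congr (by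
      filter_upwards with y
      simp [nnnorm_norm])
  -- the integrals as lintegrals
  have Ieq : ∀ h : X, ENNReal.ofReal (∫ y in S, ‖fstar y h‖ ^ p ∂μ)
      = ∫⁻ y in S, (‖fstar y h‖₊ : ℝ≥0∞) ^ p ∂μ := by
    intro h
    rw [ofReal_integral_eq_lintegral_ofReal ((hint h).integrableOn)
      (Eventually.of_forall fun y => Real.rpow_nonneg (norm_nonneg _) _)]
    apply lintegral_congr fun y => ?_
    rw [← ENNReal.ofReal_rpow_of_nonneg (norm_nonneg _) hp0.le, ofReal_norm, enorm_eq_nnnorm]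
  -- pointwise bound and Minkowski in ℝ≥0∞
  have core : (∫⁻ y in S, (‖fstar y (f + g)‖₊ : ℝ≥0∞) ^ p ∂μ) ^ (1/p) ≤
      (∫⁻ y in S, (‖fstar y f‖₊ : ℝ≥0∞) ^ p ∂μ) ^ (1/p)
      + (∫⁻ y in S, (‖fstar y g‖₊ : ℝ≥0∞) ^ p ∂μ) ^ (1/p) := by
    refine le_trans ?_ (ENNReal.lintegral_Lp_add_le (am f) (am g) hp)
    apply ENNReal.rpow_le_rpow ?_ (by positivity)
    apply lintegral_mono fun y => ?_
    apply ENNReal.rpow_le_rpow ?_ hp0.le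
    have : fstar y (f + g) = fstar y f + fstar y g := map_add _ _ _
    calc (‖fstar y (f + g)‖₊ : ℝ≥0∞) = ↑‖fstar y f + fstar y g‖₊ := by rw [this]
      _ ≤ ↑(‖fstar y f‖₊ + ‖fstar y g‖₊) := by exact_mod_cast nnnorm_add_le _ _
      _ = (‖fstar y f‖₊ : ℝ≥0∞) + ↑‖fstar y g‖₊ := ENNReal.coe_add _ _
  -- transfer back to ℝ
  have hRnn : ∀ h : X, (0:ℝ) ≤ (∫ y in S, ‖fstar y h‖ ^ p ∂μ) ^ (1/p) :=
    fun h => Real.rpow_nonneg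
      (integral_nonneg fun y => Real.rpow_nonneg (norm_nonneg _) _) _
  rw [← ENNReal.ofReal_le_ofReal_iff (by positivity)]
  have e1 : ∀ h : X, ENNReal.ofReal ((∫ y in S, ‖fstar y h‖ ^ p ∂μ) ^ (1/p))
      = (∫⁻ y in S, (‖fstar y h‖₊ : ℝ≥0∞) ^ p ∂μ) ^ (1/p) := by
    intro h
    rw [← ENNReal.ofReal_rpow_of_nonneg
      (integral_nonneg fun y => Real.rpow_nonneg (norm_nonneg _) _) (by positivity), Ieq h]
  rw [ENNReal.ofReal_add (hRnn f) (hRnn g), e1, e1, e1]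
  exact core
/-- Riesz–Kolmogorov criterion for a reflexive Banach space with a continuous frame with
respect to `L^p(Y, μ)`: a bounded set `F` is precompact iff the frame coefficients of its
elements have uniformly vanishing tails along an exhaustion by sets of finite measure. -/
theorem banach_frame_riesz_kolmogorov
    {X : Type*} [NormedAddCommGroup X] [NormedSpace ℂ X] [CompleteSpace X]
    (hrefl : Function.Surjective (NormedSpace.inclusionInDoubleDual ℂ X))
    {Y : Type*} [MeasurableSpace Y] (μ : Measure Y)
    (p : ℝ) (hp : 1 ≤ p)
    (fstar : Y → (X →L[ℂ] ℂ))
    (hbdd : ∃ B : ℝ, ∀ y, ‖fstar y‖ ≤ B)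
    (hint : ∀ f : X, Integrable (fun y => ‖fstar y f‖ ^ p) μ)
    (c C : ℝ) (hc : 0 < c) (hC : 0 < C)
    (hframe : ∀ f : X,
      c * ‖f‖ ≤ (∫ y, ‖fstar y f‖ ^ p ∂μ) ^ (1 / p) ∧
      (∫ y, ‖fstar y f‖ ^ p ∂μ) ^ (1 / p) ≤ C * ‖f‖)
    (A : ℕ → Set Y) (hAmeas : ∀ n, MeasurableSet (A n)) (hmono : Monotone A)
    (hunion : (⋃ n, A n) = Set.univ) (hfin : ∀ n, μ (A n) < ⊤)
    (F : Set X) (hF : Bornology.IsBounded F) :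
    IsCompact (closure F) ↔
      ∀ ε > 0, ∃ N : ℕ, ∀ n ≥ N, ∀ f ∈ F,
        ∫ y in (A n)ᶜ, ‖fstar y f‖ ^ p ∂μ < ε := by
  have hp0 : 0 < p := lt_of_lt_of_le one_pos hp
  have hpne : p ≠ 0 := hp0.ne'
  have Inonneg : ∀ (S : Set Y) (f : X), 0 ≤ ∫ y in S, ‖fstar y f‖ ^ p ∂μ :=
    fun S f => integral_nonneg fun y => Real.rpow_nonneg (norm_nonneg _) _
  have Itot : ∀ f : X, ∫ y in (Set.univ : Set Y), ‖fstar y f‖ ^ p ∂μ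
      = ∫ y, ‖fstar y f‖ ^ p ∂μ := fun f => by rw [setIntegral_univ]
  have Imono : ∀ (S : Set Y) (f : X),
      ∫ y in S, ‖fstar y f‖ ^ p ∂μ ≤ ∫ y, ‖fstar y f‖ ^ p ∂μ :=
    fun S f => setIntegral_le_integral (hint f)
      (Filter.Eventually.of_forall fun y => Real.rpow_nonneg (norm_nonneg _) _)
  constructor
  · -- precompact → uniformly small tails
    intro hcpt ε hε
    set η := ε ^ (1/p) with hηdef
    have hηpos : 0 < η := Real.rpow_pos_of_pos hε _
    have htb : TotallyBounded F := hcpt.totallyBounded.subset subset_closure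
    obtain ⟨t, htfin, htcover⟩ := (Metric.totallyBounded_iff.mp htb) (η / (2 * C))
      (by positivity)
    -- tails of individual elements vanish
    have htail : ∀ g : X,
        Filter.Tendsto (fun n => ∫ y in (A n)ᶜ, ‖fstar y g‖ ^ p ∂μ) atTop (𝓝 0) := by
      intro g
      have h1 : Filter.Tendsto (fun n => ∫ y in A n, ‖fstar y g‖ ^ p ∂μ) atTop
          (𝓝 (∫ y in ⋃ n, A n, ‖fstar y g‖ ^ p ∂μ)) :=
        tendsto_setIntegral_of_monotone hAmeas hmono
          (by rw [hunion]; exact (hint g).integrableOn)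
      rw [hunion, setIntegral_univ] at h1
      have h2 : ∀ n : ℕ, ∫ y in (A n)ᶜ, ‖fstar y g‖ ^ p ∂μ
          = (∫ y, ‖fstar y g‖ ^ p ∂μ) - ∫ y in A n, ‖fstar y g‖ ^ p ∂μ := by
        intro n
        have := integral_add_compl (hAmeas n) (hint g)
        linarith
      simp only [h2]
      have := (tendsto_const_nhds (x := ∫ y, ‖fstar y g‖ ^ p ∂μ)
        (f := (atTop : Filter ℕ))).sub h1
      simpa using this
    have hev : ∀ᶠ n in (atTop : Filter ℕ), ∀ g ∈ t,
        ∫ y in (A n)ᶜ, ‖fstar y g‖ ^ p ∂μ < (η / 2) ^ p :=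
      (Filter.eventually_all_finite htfin).mpr fun g _ =>
        (htail g).eventually_lt_const (by positivity)
    obtain ⟨N, hN⟩ := Filter.eventually_atTop.mp hev
    refine ⟨N, fun n hn f hf => ?_⟩
    obtain ⟨g, hgt, hfg⟩ := Set.mem_iUnion₂.mp (htcover hf)
    have hfg' : ‖f - g‖ < η / (2 * C) := by
      rw [← dist_eq_norm]
      exact Metric.mem_ball.mp hfg
    -- Minkowski
    have hmink := aux_minkowski hp fstar hint ((A n)ᶜ) g (f - g)
    rw [add_sub_cancel] at hmink
    have h1 : (∫ y in (A n)ᶜ, ‖fstar y g‖ ^ p ∂μ) ^ (1/p) < η / 2 := by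
      have := hN n hn g hgt
      calc (∫ y in (A n)ᶜ, ‖fstar y g‖ ^ p ∂μ) ^ (1/p)
          < ((η / 2) ^ p) ^ (1/p) := Real.rpow_lt_rpow (Inonneg _ _) this (by positivity)
        _ = η / 2 := by
            rw [one_div, Real.rpow_rpow_inv (by positivity) hpne]
    have h2 : (∫ y in (A n)ᶜ, ‖fstar y (f - g)‖ ^ p ∂μ) ^ (1/p) < η / 2 := by
      calc (∫ y in (A n)ᶜ, ‖fstar y (f - g)‖ ^ p ∂μ) ^ (1/p)
          ≤ (∫ y, ‖fstar y (f - g)‖ ^ p ∂μ) ^ (1/p) :=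
            Real.rpow_le_rpow (Inonneg _ _) (Imono _ _) (by positivity)
        _ ≤ C * ‖f - g‖ := (hframe (f - g)).2
        _ < C * (η / (2 * C)) := by
            exact mul_lt_mul_of_pos_left hfg' hC
        _ = η / 2 := by field_simp
    have h3 : (∫ y in (A n)ᶜ, ‖fstar y f‖ ^ p ∂μ) ^ (1/p) < η := by
      calc (∫ y in (A n)ᶜ, ‖fstar y f‖ ^ p ∂μ) ^ (1/p)
          ≤ _ + _ := hmink
        _ < η / 2 + η / 2 := by exact add_lt_add h1 h2
        _ = η := by ring
    calc ∫ y in (A n)ᶜ, ‖fstar y f‖ ^ p ∂μ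
        = ((∫ y in (A n)ᶜ, ‖fstar y f‖ ^ p ∂μ) ^ (1/p)) ^ p := by
          rw [one_div, Real.rpow_inv_rpow (Inonneg _ _) hpne]
      _ < η ^ p := Real.rpow_lt_rpow (Real.rpow_nonneg (Inonneg _ _) _) h3 hp0
      _ = ε := by rw [hηdef, one_div, Real.rpow_inv_rpow hε.le hpne]
  · -- uniformly small tails → precompact
    intro htails
    obtain ⟨M, hM⟩ := hF.exists_norm_le
    obtain ⟨B, hB⟩ := hbdd
    have hseq : IsSeqCompact (closure F) := by
      intro u hu
      have happrox : ∀ k : ℕ, ∃ w ∈ F, dist (u k) w < 1 / (k + 1) :=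
        fun k => Metric.mem_closure_iff.mp (hu k) _ (by positivity)
      choose v hvF hvd using happrox
      have hvnorm : ∀ k, ‖v k‖ ≤ M := fun k => hM _ (hvF k)
      obtain ⟨φ, x, hφ, hweak⟩ := aux_weak_seq_compact hrefl v hvnorm
      have hcauchy : CauchySeq fun k => v (φ k) := by
        rw [Metric.cauchySeq_iff]
        intro ε hε
        obtain ⟨N₁, hN₁⟩ := htails ((c * ε / 4) ^ p) (by positivity)
        set n := N₁ with hndef
        -- dominated convergence on A n
        have hDCT : Filter.Tendsto
            (fun k => ∫ y in A n, ‖fstar y (v (φ k) - x)‖ ^ p ∂μ) atTop (𝓝 0) := by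
          have h0 : (0 : ℝ) = ∫ y in A n, (0 : ℝ) ∂μ := by simp
          rw [h0]
          apply tendsto_integral_of_dominated_convergence
            (bound := fun _ => (max B 0 * (M + ‖x‖)) ^ p)
          · exact fun k => ((hint (v (φ k) - x)).aestronglyMeasurable).restrict
          · exact integrableOn_const (hfin n).ne
          · intro k
            filter_upwards with y
            rw [Real.norm_of_nonneg (Real.rpow_nonneg (norm_nonneg _) _)]
            apply Real.rpow_le_rpow (norm_nonneg _) ?_ hp0.le
            calc ‖fstar y (v (φ k) - x)‖ ≤ ‖fstar y‖ * ‖v (φ k) - x‖ :=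
                  (fstar y).le_opNorm _
              _ ≤ max B 0 * (M + ‖x‖) := by
                  apply mul_le_mul ((hB y).trans (le_max_left _ _)) ?_ (norm_nonneg _)
                    (le_max_right _ _)
                  calc ‖v (φ k) - x‖ ≤ ‖v (φ k)‖ + ‖x‖ := norm_sub_le _ _
                    _ ≤ M + ‖x‖ := by gcongr; exact hvnorm _
          · filter_upwards with y
            have h1 : Filter.Tendsto (fun k => fstar y (v (φ k))) atTop
                (𝓝 (fstar y x)) := hweak (fstar y)
            have h2 : Filter.Tendsto (fun k => ‖fstar y (v (φ k) - x)‖) atTop (𝓝 0) := by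
              have := (h1.sub (tendsto_const_nhds (x := fstar y x))).norm
              simp only [sub_self, norm_zero] at this
              refine this.congr fun k => ?_
              rw [map_sub]
            have h3 := h2.rpow_const (p := p) (Or.inr hp0.le)
            rwa [Real.zero_rpow hpne] at h3
        obtain ⟨N₂, hN₂⟩ := Filter.eventually_atTop.mp
          (hDCT.eventually_lt_const (show (0:ℝ) < (c * ε / 8) ^ p by positivity))
        refine ⟨N₂, fun a ha b hb => ?_⟩
        rw [dist_eq_norm]
        -- estimate c * ‖v (φ a) - v (φ b)‖
        set w := v (φ a) - v (φ b) with hwdef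
        have frame1 := (hframe w).1
        have hsplit : ∫ y, ‖fstar y w‖ ^ p ∂μ
            = (∫ y in A n, ‖fstar y w‖ ^ p ∂μ) + ∫ y in (A n)ᶜ, ‖fstar y w‖ ^ p ∂μ :=
          (integral_add_compl (hAmeas n) (hint w)).symm
        have hroot : (∫ y, ‖fstar y w‖ ^ p ∂μ) ^ (1/p)
            ≤ (∫ y in A n, ‖fstar y w‖ ^ p ∂μ) ^ (1/p)
              + (∫ y in (A n)ᶜ, ‖fstar y w‖ ^ p ∂μ) ^ (1/p) := by
          rw [hsplit]
          exact aux_root_add_le hp (Inonneg _ _) (Inonneg _ _)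
        -- interior part via Minkowski and DCT
        have hintpart : (∫ y in A n, ‖fstar y w‖ ^ p ∂μ) ^ (1/p) < c * ε / 4 := by
          have hmink := aux_minkowski hp fstar hint (A n) (v (φ a) - x) (x - v (φ b))
          have harg : v (φ a) - x + (x - v (φ b)) = w := by rw [hwdef]; abel
          rw [harg] at hmink
          have hswap : ∫ y in A n, ‖fstar y (x - v (φ b))‖ ^ p ∂μ
              = ∫ y in A n, ‖fstar y (v (φ b) - x)‖ ^ p ∂μ := by
            apply integral_congr_ae
            filter_upwards with y
            rw [show x - v (φ b) = -(v (φ b) - x) by abel, map_neg, norm_neg]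
          have ha' : (∫ y in A n, ‖fstar y (v (φ a) - x)‖ ^ p ∂μ) ^ (1/p) < c * ε / 8 := by
            calc (∫ y in A n, ‖fstar y (v (φ a) - x)‖ ^ p ∂μ) ^ (1/p)
                < ((c * ε / 8) ^ p) ^ (1/p) :=
                  Real.rpow_lt_rpow (Inonneg _ _) (hN₂ a ha) (by positivity)
              _ = c * ε / 8 := by rw [one_div, Real.rpow_rpow_inv (by positivity) hpne]
          have hb' : (∫ y in A n, ‖fstar y (x - v (φ b))‖ ^ p ∂μ) ^ (1/p) < c * ε / 8 := by
            rw [hswap]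
            calc (∫ y in A n, ‖fstar y (v (φ b) - x)‖ ^ p ∂μ) ^ (1/p)
                < ((c * ε / 8) ^ p) ^ (1/p) :=
                  Real.rpow_lt_rpow (Inonneg _ _) (hN₂ b hb) (by positivity)
              _ = c * ε / 8 := by rw [one_div, Real.rpow_rpow_inv (by positivity) hpne]
          calc (∫ y in A n, ‖fstar y w‖ ^ p ∂μ) ^ (1/p) ≤ _ + _ := hmink
            _ < c * ε / 8 + c * ε / 8 := add_lt_add ha' hb'
            _ = c * ε / 4 := by ring
        -- tail part
        have htailpart : (∫ y in (A n)ᶜ, ‖fstar y w‖ ^ p ∂μ) ^ (1/p) < c * ε / 2 := by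
          have hmink := aux_minkowski hp fstar hint ((A n)ᶜ) (v (φ a)) (-(v (φ b)))
          have harg : v (φ a) + -(v (φ b)) = w := by rw [hwdef]; abel
          rw [harg] at hmink
          have hswap : ∫ y in (A n)ᶜ, ‖fstar y (-(v (φ b)))‖ ^ p ∂μ
              = ∫ y in (A n)ᶜ, ‖fstar y (v (φ b))‖ ^ p ∂μ := by
            apply integral_congr_ae
            filter_upwards with y
            rw [map_neg, norm_neg]
          have ha' : (∫ y in (A n)ᶜ, ‖fstar y (v (φ a))‖ ^ p ∂μ) ^ (1/p) < c * ε / 4 := by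
            calc (∫ y in (A n)ᶜ, ‖fstar y (v (φ a))‖ ^ p ∂μ) ^ (1/p)
                < ((c * ε / 4) ^ p) ^ (1/p) :=
                  Real.rpow_lt_rpow (Inonneg _ _)
                    (hN₁ n (le_refl _) _ (hvF (φ a))) (by positivity)
              _ = c * ε / 4 := by rw [one_div, Real.rpow_rpow_inv (by positivity) hpne]
          have hb' : (∫ y in (A n)ᶜ, ‖fstar y (-(v (φ b)))‖ ^ p ∂μ) ^ (1/p) < c * ε / 4 := by
            rw [hswap]
            calc (∫ y in (A n)ᶜ, ‖fstar y (v (φ b))‖ ^ p ∂μ) ^ (1/p)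
                < ((c * ε / 4) ^ p) ^ (1/p) :=
                  Real.rpow_lt_rpow (Inonneg _ _)
                    (hN₁ n (le_refl _) _ (hvF (φ b))) (by positivity)
              _ = c * ε / 4 := by rw [one_div, Real.rpow_rpow_inv (by positivity) hpne]
          calc (∫ y in (A n)ᶜ, ‖fstar y w‖ ^ p ∂μ) ^ (1/p) ≤ _ + _ := hmink
            _ < c * ε / 4 + c * ε / 4 := add_lt_add ha' hb'
            _ = c * ε / 2 := by ring
        have : c * ‖w‖ < c * ε := by
          calc c * ‖w‖ ≤ (∫ y, ‖fstar y w‖ ^ p ∂μ) ^ (1/p) := frame1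
            _ ≤ _ + _ := hroot
            _ < c * ε / 4 + c * ε / 2 := add_lt_add hintpart htailpart
            _ ≤ c * ε := by linarith [mul_pos hc hε]
        exact lt_of_mul_lt_mul_left this hc.le
      obtain ⟨x', hx'⟩ := cauchySeq_tendsto_of_complete hcauchy
      have hux' : Filter.Tendsto (fun k => u (φ k)) atTop (𝓝 x') := by
        have hd : Filter.Tendsto (fun k => dist (u (φ k)) (v (φ k))) atTop (𝓝 0) := by
          apply squeeze_zero (fun k => dist_nonneg) (fun k => (hvd (φ k)).le)
          have : Filter.Tendsto (fun k : ℕ => 1 / ((k : ℝ) + 1)) atTop (𝓝 0) :=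
            tendsto_one_div_add_atTop_nhds_zero_nat
          exact this.comp (hφ.tendsto_atTop)
        have := hd.add (tendsto_iff_dist_tendsto_zero.mp hx')
        rw [add_zero] at this
        apply tendsto_iff_dist_tendsto_zero.mpr
        apply squeeze_zero (fun k => dist_nonneg) (fun k => dist_triangle _ _ _) this
      exact ⟨x', mem_closure_of_tendsto hx'
        (Filter.Eventually.of_forall fun k => hvF (φ k)), φ, hφ, hux'⟩
    exact hseq.isCompact
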